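/- Let r be a positive natural number, let b, c ∈ ℝ^{2r} and let A be a 2r×2r real matrix. Then the function s ↦ det [[J̄_{2r} + sA, sc], [s bᵀ, 0]] (the determinant of the (2r+1)×(2r+1) matrix with top-left block J̄_{2r} + sA, last column s·c with bottom-right corner 0, and last row s·bᵀ) is a polynomial in s whose coefficients of degree 0 and degree 1 vanish and whose coefficient of degree 2 equals Σ_{i=1}^{r} (c_{2i} b_{2i−1} − c_{2i−1} b_{2i}). Equivalently, there is a polynomial q with det [[J̄_{2r} + sA, sc], [s bᵀ, 0]] = s²·(Σ_{i=1}^{r} (c_{2i} b_{2i−1} − c_{2i−1} b_{2i})) + s³·q(s) for all s. -/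

import Mathlib

open Matrix

/-- The 2×2 matrix `J = [[0,1],[-1,0]]`. -/
def Jmat : Matrix (Fin 2) (Fin 2) ℝ := !![0, 1; -1, 0]

/-- The `2r × 2r` block-diagonal matrix with `r` diagonal blocks equal to `J`. -/
def Jbar (r : ℕ) : Matrix (Fin (2 * r)) (Fin (2 * r)) ℝ :=
  Matrix.of fun i j =>
    if (i : ℕ) / 2 = (j : ℕ) / 2 then
      Jmat ⟨(i : ℕ) % 2, by omega⟩ ⟨(j : ℕ) % 2, by omega⟩
    else 0

/-- The equivalence `Fin 2 × Fin r ≃ Fin (2*r)`, `(a,k) ↦ 2k+a`. -/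
def pairEquiv (r : ℕ) : Fin 2 × Fin r ≃ Fin (2 * r) where
  toFun p := ⟨2 * (p.2 : ℕ) + (p.1 : ℕ), by have := p.1.2; have := p.2.2; omega⟩
  invFun i := (⟨(i : ℕ) % 2, by omega⟩, ⟨(i : ℕ) / 2, by have := i.2; omega⟩)
  left_inv p := by
    have h1 := p.1.2; have h2 := p.2.2
    ext <;> simp <;> omega
  right_inv i := by
    have := i.2
    ext; simp; omega

lemma Jbar_eq (r : ℕ) :
    Jbar r = (blockDiagonal fun _ : Fin r => Jmat).submatrix (pairEquiv r).symm (pairEquiv r).symm := by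
  ext i j
  simp only [Jbar, Matrix.of_apply, submatrix_apply, blockDiagonal_apply, pairEquiv,
    Equiv.coe_fn_symm_mk]
  by_cases h : (i : ℕ) / 2 = (j : ℕ) / 2
  · rw [if_pos h, if_pos (by simp [Fin.ext_iff, h])]
  · rw [if_neg h, if_neg (by simp [Fin.ext_iff, h])]

lemma Jmat_mul_neg : Jmat * (-Jmat) = 1 := by
  ext i j
  fin_cases i <;> fin_cases j <;>
    simp [Jmat, Matrix.mul_apply, Fin.sum_univ_two, Matrix.one_apply]

lemma Jbar_mul_neg (r : ℕ) : Jbar r * (-Jbar r) = 1 := by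
  rw [Jbar_eq]
  rw [show -((blockDiagonal fun _ : Fin r => Jmat).submatrix (pairEquiv r).symm (pairEquiv r).symm)
      = ((blockDiagonal fun _ : Fin r => -Jmat).submatrix (pairEquiv r).symm (pairEquiv r).symm) by
    ext i j; simp [blockDiagonal_apply]; split <;> simp]
  rw [submatrix_mul_equiv _ _ _ (pairEquiv r).symm, ← blockDiagonal_mul]
  have h2 : (fun _ : Fin r => Jmat * -Jmat) = (1 : Fin r → Matrix (Fin 2) (Fin 2) ℝ) := by
    funext _; exact Jmat_mul_neg
  rw [h2, blockDiagonal_one, submatrix_one_equiv]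

lemma Jbar_det (r : ℕ) : (Jbar r).det = 1 := by
  rw [Jbar_eq, det_submatrix_equiv_self, det_blockDiagonal]
  simp [Jmat, Matrix.det_fin_two_of]

noncomputable instance (r : ℕ) : Invertible (Jbar r) :=
  invertibleOfRightInverse _ _ (Jbar_mul_neg r)

lemma Jbar_invOf (r : ℕ) : ⅟(Jbar r) = -(Jbar r) := by
  have := invOf_eq_nonsing_inv (Jbar r)
  rw [this, Matrix.inv_eq_right_inv (Jbar_mul_neg r)]

lemma two_mul_lt' {r : ℕ} (i : Fin r) : 2 * (i : ℕ) < 2 * r := by have := i.2; omega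

lemma two_mul_add_one_lt' {r : ℕ} (i : Fin r) : 2 * (i : ℕ) + 1 < 2 * r := by have := i.2; omega

lemma detN0 (r : ℕ) (b c : Fin (2 * r) → ℝ) :
    (Matrix.fromBlocks (Jbar r) (Matrix.of fun i (_ : Fin 1) => c i)
        (Matrix.of fun (_ : Fin 1) j => b j) (0 : Matrix (Fin 1) (Fin 1) ℝ)).det =
      ∑ i : Fin r,
        (c ⟨2 * (i : ℕ) + 1, two_mul_add_one_lt' i⟩ * b ⟨2 * (i : ℕ), two_mul_lt' i⟩ -
         c ⟨2 * (i : ℕ), two_mul_lt' i⟩ * b ⟨2 * (i : ℕ) + 1, two_mul_add_one_lt' i⟩) := by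
  rw [det_fromBlocks₁₁, Jbar_det, Jbar_invOf, one_mul]
  rw [Matrix.mul_neg, Matrix.neg_mul, zero_sub, neg_neg]
  rw [Matrix.det_fin_one]
  simp only [Matrix.mul_apply, Matrix.of_apply]
  have hinner : ∀ q, (∑ x : Fin (2 * r), b x * Jbar r x q)
      = ∑ p : Fin 2 × Fin r, b (pairEquiv r p) * Jbar r (pairEquiv r p) q :=
    fun q => (Equiv.sum_comp (pairEquiv r) _).symm
  simp only [hinner]
  rw [← Equiv.sum_comp (pairEquiv r)]
  have hJ : ∀ p q : Fin 2 × Fin r, Jbar r (pairEquiv r p) (pairEquiv r q) =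
      (blockDiagonal fun _ : Fin r => Jmat) p q := by
    intro p q; rw [Jbar_eq]; simp
  simp only [hJ, blockDiagonal_apply, Fintype.sum_prod_type, Fin.sum_univ_two]
  simp only [Jmat, Matrix.cons_val', Matrix.cons_val_zero, Matrix.cons_val_one, Matrix.head_cons,
    Matrix.empty_val', Matrix.cons_val_fin_one, Matrix.head_fin_const, Matrix.of_apply,
    mul_ite, ite_mul, mul_zero, zero_mul, mul_one, mul_neg_one, neg_mul, one_mul]
  simp only [ite_self, Finset.sum_const_zero, Finset.sum_ite_eq', Finset.mem_univ, if_true,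
    zero_add, add_zero]
  rw [← Finset.sum_add_distrib]
  apply Finset.sum_congr rfl
  intro k _
  have e0 : (pairEquiv r) ((0 : Fin 2), k) = ⟨2 * (k : ℕ), two_mul_lt' k⟩ := by
    simp [pairEquiv, Fin.ext_iff]
  have e1 : (pairEquiv r) ((1 : Fin 2), k) = ⟨2 * (k : ℕ) + 1, two_mul_add_one_lt' k⟩ := by
    simp [pairEquiv, Fin.ext_iff]
  rw [e0, e1]
  ring


set_option maxRecDepth 10000 in
/-- Corollary: `s ↦ det [[J̄₂ᵣ + sA, sc], [sbᵀ, 0]]` is a polynomial in `s`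
of the form `s² · Σᵢ (c_{2i} b_{2i-1} - c_{2i-1} b_{2i}) + s³ · q(s)`. -/
theorem stmt_8 (r : ℕ) (hr : 1 ≤ r) (b c : Fin (2 * r) → ℝ)
    (A : Matrix (Fin (2 * r)) (Fin (2 * r)) ℝ) :
    ∃ q : Polynomial ℝ, ∀ s : ℝ,
      ((Matrix.fromBlocks (Jbar r + s • A) (Matrix.of fun i (_ : Fin 1) => s * c i)
          (Matrix.of fun (_ : Fin 1) j => s * b j) 0).reindex finSumFinEquiv finSumFinEquiv).det =
        s ^ 2 * (∑ i : Fin r,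
          (c ⟨2 * (i : ℕ) + 1, by have := i.2; omega⟩ * b ⟨2 * (i : ℕ), by have := i.2; omega⟩ -
           c ⟨2 * (i : ℕ), by have := i.2; omega⟩ * b ⟨2 * (i : ℕ) + 1, by have := i.2; omega⟩))
        + s ^ 3 * q.eval s := by
  classical
  set TL : Matrix (Fin (2 * r)) (Fin (2 * r)) (Polynomial ℝ) :=
    (Jbar r).map Polynomial.C + (Polynomial.X : Polynomial ℝ) • A.map Polynomial.C with hTL
  set N : Matrix (Fin (2 * r) ⊕ Fin 1) (Fin (2 * r) ⊕ Fin 1) (Polynomial ℝ) :=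
    Matrix.fromBlocks TL (Matrix.of fun i (_ : Fin 1) => Polynomial.C (c i))
      (Matrix.of fun (_ : Fin 1) j => Polynomial.C (b j)) 0 with hN
  set M : Matrix (Fin (2 * r) ⊕ Fin 1) (Fin (2 * r) ⊕ Fin 1) (Polynomial ℝ) :=
    Matrix.fromBlocks TL (Matrix.of fun i (_ : Fin 1) => Polynomial.X * Polynomial.C (c i))
      (Matrix.of fun (_ : Fin 1) j => Polynomial.X * Polynomial.C (b j)) 0 with hM
  set d : Fin (2 * r) ⊕ Fin 1 → Polynomial ℝ :=
    Sum.elim (fun _ => 1) (fun _ => Polynomial.X) with hd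
  have hMD : M = diagonal d * N * diagonal d := by
    ext i j
    rw [Matrix.mul_diagonal, Matrix.diagonal_mul]
    rcases i with i | i <;> rcases j with j | j <;>
      simp [hM, hN, hd, Matrix.fromBlocks_apply₁₁, Matrix.fromBlocks_apply₁₂,
        Matrix.fromBlocks_apply₂₁, Matrix.fromBlocks_apply₂₂] <;> ring
  have hdetd : (diagonal d).det = Polynomial.X := by
    rw [det_diagonal]
    simp [hd, Fintype.prod_sum_type]
  have hdetM : M.det = Polynomial.X ^ 2 * N.det := by
    rw [hMD, det_mul, det_mul, hdetd]; ring
  have hN0 : N.det.coeff 0 = ∑ i : Fin r,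
      (c ⟨2 * (i : ℕ) + 1, by have := i.2; omega⟩ * b ⟨2 * (i : ℕ), by have := i.2; omega⟩ -
       c ⟨2 * (i : ℕ), by have := i.2; omega⟩ * b ⟨2 * (i : ℕ) + 1, by have := i.2; omega⟩) := by
    rw [Polynomial.coeff_zero_eq_eval_zero, show (Polynomial.eval 0 N.det : ℝ)
        = (Polynomial.evalRingHom (0 : ℝ)) N.det from rfl, RingHom.map_det, ← detN0 r b c]
    congr 1
    ext i j
    rcases i with i | i <;> rcases j with j | j <;>
      simp only [hN, hTL, RingHom.mapMatrix_apply, Matrix.map_apply, Matrix.fromBlocks_apply₁₁,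
        Matrix.fromBlocks_apply₁₂, Matrix.fromBlocks_apply₂₁, Matrix.fromBlocks_apply₂₂,
        Matrix.add_apply, Matrix.smul_apply, smul_eq_mul, Matrix.of_apply, Polynomial.eval_add,
        Polynomial.eval_mul, Polynomial.eval_X, Polynomial.eval_C, Polynomial.coe_evalRingHom,
        Matrix.zero_apply, Polynomial.eval_zero, zero_mul, add_zero]
  refine ⟨N.det.divX, fun s => ?_⟩
  rw [Matrix.det_reindex_self]
  have hev : (Matrix.fromBlocks (Jbar r + s • A) (Matrix.of fun i (_ : Fin 1) => s * c i)
      (Matrix.of fun (_ : Fin 1) j => s * b j) 0).det = Polynomial.eval s M.det := by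
    rw [show (Polynomial.eval s M.det : ℝ) = (Polynomial.evalRingHom s) M.det from rfl,
      RingHom.map_det]
    congr 1
    ext i j
    rcases i with i | i <;> rcases j with j | j <;>
      simp only [hM, hTL, RingHom.mapMatrix_apply, Matrix.map_apply, Matrix.fromBlocks_apply₁₁,
        Matrix.fromBlocks_apply₁₂, Matrix.fromBlocks_apply₂₁, Matrix.fromBlocks_apply₂₂,
        Matrix.add_apply, Matrix.smul_apply, smul_eq_mul, Matrix.of_apply, Polynomial.eval_add,
        Polynomial.eval_mul, Polynomial.eval_X, Polynomial.eval_C, Polynomial.coe_evalRingHom,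
        Matrix.zero_apply, Polynomial.eval_zero]
  rw [hev, hdetM, Polynomial.eval_mul, Polynomial.eval_pow, Polynomial.eval_X]
  conv_lhs => rw [← Polynomial.X_mul_divX_add N.det]
  simp only [Polynomial.eval_add, Polynomial.eval_mul, Polynomial.eval_X, Polynomial.eval_C, hN0]
  ring
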